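/- First GKS inequality: for a generalized Ising model with all couplings J_R ≥ 0 on a finite spin set Λ, every correlation ⟨σ_A⟩ is nonnegative: ⟨σ_A⟩ ≥ 0 for all A ⊆ Λ. -/
import Mathlib

set_option linter.unusedSectionVars false


variable {Λ : Type*}

/-- The value `±1` of the spin at site `j` in configuration `s`. -/
def spin (s : Λ → Bool) (j : Λ) : ℝ := if s j then 1 else -1

/-- The product `σ_A = ∏_{j ∈ A} σ_j` of the spins in `A`. -/
def spinProd (A : Finset Λ) (s : Λ → Bool) : ℝ := ∏ j ∈ A, spin s j

variable [Fintype Λ] [DecidableEq Λ]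

/-- Generalized Ising Hamiltonian `H(σ) = -Σ_R J_R σ_R` with couplings `J`. -/
def isingHamiltonian (J : Finset Λ → ℝ) (s : Λ → Bool) : ℝ :=
  -∑ R : Finset Λ, J R * spinProd R s

/-- Gibbs (thermal) expectation `⟨f⟩ = Σ_σ f(σ) e^{-βH(σ)} / Σ_σ e^{-βH(σ)}`. -/
noncomputable def gibbsExpect (β : ℝ) (J : Finset Λ → ℝ) (f : (Λ → Bool) → ℝ) : ℝ :=
  (∑ s : Λ → Bool, f s * Real.exp (-β * isingHamiltonian J s)) /
    ∑ s : Λ → Bool, Real.exp (-β * isingHamiltonian J s)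

lemma spin_sq (s : Λ → Bool) (j : Λ) : spin s j * spin s j = 1 := by
  unfold spin; split <;> norm_num

lemma spinProd_eq_one_or (A : Finset Λ) (s : Λ → Bool) :
    spinProd A s = 1 ∨ spinProd A s = -1 := by
  classical
  induction A using Finset.induction_on with
  | empty => left; simp [spinProd]
  | @insert a t hat ih =>
    rw [spinProd, Finset.prod_insert hat, ← spinProd]
    unfold spin
    rcases ih with h1 | h1 <;> rw [h1] <;> split <;> simp

lemma spinProd_mul (A B : Finset Λ) (s : Λ → Bool) :
    spinProd A s * spinProd B s = spinProd (symmDiff A B) s := by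
  classical
  unfold spinProd
  have hA : ∏ j ∈ A, spin s j = (∏ j ∈ A \ B, spin s j) * ∏ j ∈ A ∩ B, spin s j := by
    rw [← Finset.prod_union (Finset.disjoint_sdiff_inter A B), Finset.sdiff_union_inter]
  have hB : ∏ j ∈ B, spin s j = (∏ j ∈ B \ A, spin s j) * ∏ j ∈ B ∩ A, spin s j := by
    rw [← Finset.prod_union (Finset.disjoint_sdiff_inter B A), Finset.sdiff_union_inter]
  rw [Finset.inter_comm B A] at hB
  have hsd : symmDiff A B = (A \ B) ∪ (B \ A) := by
    simp [symmDiff, Finset.sup_eq_union]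
  rw [hA, hB, hsd, Finset.prod_union disjoint_sdiff_sdiff]
  have : (∏ j ∈ A ∩ B, spin s j) * ∏ j ∈ A ∩ B, spin s j = 1 := by
    rw [← Finset.prod_mul_distrib]
    exact Finset.prod_eq_one fun j _ => spin_sq s j
  calc (∏ j ∈ A \ B, spin s j) * (∏ j ∈ A ∩ B, spin s j) *
        ((∏ j ∈ B \ A, spin s j) * ∏ j ∈ A ∩ B, spin s j)
      = (∏ j ∈ A \ B, spin s j) * (∏ j ∈ B \ A, spin s j) *
        ((∏ j ∈ A ∩ B, spin s j) * ∏ j ∈ A ∩ B, spin s j) := by ring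
    _ = (∏ j ∈ A \ B, spin s j) * ∏ j ∈ B \ A, spin s j := by rw [this, mul_one]

lemma spinProd_update (B : Finset Λ) (s : Λ → Bool) (j : Λ) (hj : j ∈ B) :
    spinProd B (Function.update s j (!s j)) = -spinProd B s := by
  classical
  rw [spinProd, ← Finset.prod_erase_mul _ _ hj,
      spinProd, ← Finset.prod_erase_mul _ _ hj]
  have h1 : ∀ k ∈ B.erase j, spin (Function.update s j (!s j)) k = spin s k := by
    intro k hk
    have : k ≠ j := Finset.ne_of_mem_erase hk
    simp [spin, Function.update_of_ne this]
  rw [Finset.prod_congr rfl h1]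
  have h2 : spin (Function.update s j (!s j)) j = -spin s j := by
    simp only [spin, Function.update_self]
    cases s j <;> norm_num
  rw [h2]; ring

lemma sum_spinProd_nonneg (B : Finset Λ) :
    0 ≤ ∑ s : Λ → Bool, spinProd B s := by
  classical
  rcases B.eq_empty_or_nonempty with rfl | ⟨j, hj⟩
  · simp only [spinProd, Finset.prod_empty]
    positivity
  · have h0 : ∑ s : Λ → Bool, spinProd B s = 0 := by
      apply Finset.sum_ninvolution (fun s => Function.update s j (!s j))
      · intro s
        rw [spinProd_update B s j hj]; ring
      · intro s _ h
        have := congrFun h j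
        simp [Function.update_self] at this
      · intro s; exact Finset.mem_univ _
      · intro s
        funext k
        by_cases hk : k = j
        · subst hk; simp [Function.update_self]
        · simp [Function.update_of_ne hk]
    rw [h0]

lemma exp_spin (x ε : ℝ) (hε : ε = 1 ∨ ε = -1) :
    Real.exp (x * ε) = Real.cosh x + ε * Real.sinh x := by
  rcases hε with rfl | rfl
  · rw [Real.cosh_eq, Real.sinh_eq, mul_one]; ring
  · rw [Real.cosh_eq, Real.sinh_eq, show x * (-1) = -x by ring]; ring

/-- **First GKS inequality.** For a generalized Ising model with all couplings
`J_R ≥ 0` on a finite spin set `Λ`, every correlation is nonnegative: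
`⟨σ_A⟩ ≥ 0` for all `A ⊆ Λ`. -/
theorem gks_first_inequality {Λ : Type*} [Fintype Λ] [DecidableEq Λ]
    (J : Finset Λ → ℝ) (hJ : ∀ R, 0 ≤ J R) (β : ℝ) (hβ : 0 < β) (A : Finset Λ) :
    0 ≤ gibbsExpect β J (spinProd A) := by
  classical
  unfold gibbsExpect
  apply div_nonneg
  · have hexp : ∀ s : Λ → Bool, Real.exp (-β * isingHamiltonian J s)
        = ∏ R : Finset Λ, (Real.sinh (β * J R) * spinProd R s + Real.cosh (β * J R)) := by
      intro s
      have h1 : -β * isingHamiltonian J s = ∑ R : Finset Λ, (β * J R) * spinProd R s := by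
        unfold isingHamiltonian
        rw [neg_mul_neg, Finset.mul_sum]
        exact Finset.sum_congr rfl fun R _ => by ring
      rw [h1, Real.exp_sum]
      refine Finset.prod_congr rfl fun R _ => ?_
      rw [exp_spin _ _ (spinProd_eq_one_or R s)]
      ring
    calc (0:ℝ) ≤ ∑ S ∈ (Finset.univ : Finset (Finset Λ)).powerset,
          ((∏ R ∈ S, Real.sinh (β * J R)) *
            (∏ R ∈ Finset.univ \ S, Real.cosh (β * J R))) *
          ∑ s : Λ → Bool, spinProd (S.fold symmDiff A id) s := by
          apply Finset.sum_nonneg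
          intro S _
          apply mul_nonneg
          · apply mul_nonneg
            · exact Finset.prod_nonneg fun R _ =>
                Real.sinh_nonneg_iff.mpr (mul_nonneg hβ.le (hJ R))
            · exact Finset.prod_nonneg fun R _ => (Real.cosh_pos _).le
          · exact sum_spinProd_nonneg _
      _ = ∑ s : Λ → Bool, spinProd A s * Real.exp (-β * isingHamiltonian J s) := by
          simp only [Finset.mul_sum]
          rw [Finset.sum_comm]
          refine Finset.sum_congr rfl fun s _ => ?_
          rw [hexp s, Finset.prod_add, Finset.mul_sum]
          have key : ∀ S : Finset (Finset Λ), spinProd A s * ∏ R ∈ S, Real.sinh (β * J R) * spinProd R s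
              = spinProd (S.fold symmDiff A id) s * ∏ R ∈ S, Real.sinh (β * J R) := by
            intro S
            induction S using Finset.induction_on with
            | empty => simp
            | @insert R T hRT ih =>
              rw [Finset.prod_insert hRT, Finset.fold_insert hRT, Finset.prod_insert hRT]
              calc spinProd A s * (Real.sinh (β * J R) * spinProd R s *
                    ∏ x ∈ T, Real.sinh (β * J x) * spinProd x s)
                  = (spinProd A s * ∏ x ∈ T, Real.sinh (β * J x) * spinProd x s) *
                    (Real.sinh (β * J R) * spinProd R s) := by ring
                _ = (spinProd (T.fold symmDiff A id) s * ∏ x ∈ T, Real.sinh (β * J x)) *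
                    (Real.sinh (β * J R) * spinProd R s) := by rw [ih]
                _ = (spinProd R s * spinProd (T.fold symmDiff A id) s) *
                    (Real.sinh (β * J R) * ∏ x ∈ T, Real.sinh (β * J x)) := by ring
                _ = spinProd (symmDiff R (T.fold symmDiff A id)) s *
                    (Real.sinh (β * J R) * ∏ x ∈ T, Real.sinh (β * J x)) := by
                    rw [spinProd_mul]
                _ = spinProd (symmDiff (id R) (T.fold symmDiff A id)) s *
                    (Real.sinh (β * J R) * ∏ x ∈ T, Real.sinh (β * J x)) := rfl
          refine Finset.sum_congr rfl fun S _ => Eq.symm ?_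
          calc spinProd A s * ((∏ R ∈ S, Real.sinh (β * J R) * spinProd R s) *
                ∏ R ∈ Finset.univ \ S, Real.cosh (β * J R))
              = (spinProd A s * ∏ R ∈ S, Real.sinh (β * J R) * spinProd R s) *
                ∏ R ∈ Finset.univ \ S, Real.cosh (β * J R) := by ring
            _ = (spinProd (S.fold symmDiff A id) s * ∏ R ∈ S, Real.sinh (β * J R)) *
                ∏ R ∈ Finset.univ \ S, Real.cosh (β * J R) := by rw [key S]
            _ = (∏ R ∈ S, Real.sinh (β * J R)) * (∏ R ∈ Finset.univ \ S, Real.cosh (β * J R)) *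
                spinProd (S.fold symmDiff A id) s := by ring
  · exact Finset.sum_nonneg fun s _ => (Real.exp_pos _).le
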